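/- If a language L accepted by a DFA with n states (n ≥ 2) is not prefix-convex, then there exists a witness (u, v, w) with u a prefix of v, v a prefix of w, u ∈ L, w ∈ L, v ∉ L, and |w| ≤ 2n − 1. -/

import Mathlib

/-- A language `L` is prefix-convex if whenever `u, w ∈ L` with `u` a prefix of `w`,
every word `v` with `u` a prefix of `v` and `v` a prefix of `w` is also in `L`. -/
def PrefixConvex {α : Type*} (L : Set (List α)) : Prop :=
  ∀ u v w : List α, u ∈ L → w ∈ L → u <+: w → u <+: v → v <+: w → v ∈ L

/-- Evaluating a cut word on prefixes outside the cut region agrees with the original. -/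
lemma eval_cut_take {α σ : Type*} (M : DFA α σ) (w : List α) {j k : ℕ} (hjk : j ≤ k)
    (hk : k ≤ w.length)
    (hs : M.eval (w.take j) = M.eval (w.take k)) {i : ℕ} (hki : k ≤ i) :
    M.eval ((w.take j ++ w.drop k).take (j + (i - k))) = M.eval (w.take i) := by
  have h1 : (w.take j ++ w.drop k).take (j + (i - k))
      = w.take j ++ (w.drop k).take (i - k) := by
    rw [List.take_append]
    have hlj : (w.take j).length = j := by
      simp [List.length_take]; omega
    rw [hlj, List.take_take]
    congr 2 <;> omega
  have h2 : w.take i = w.take k ++ (w.drop k).take (i - k) := by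
    rw [← List.take_add]
    congr 1
    omega
  rw [h1, h2]
  simp only [DFA.eval, DFA.evalFrom_of_append]
  rw [show M.evalFrom M.start (w.take j) = M.eval (w.take j) from rfl, hs]
  rfl

/-- The cutting lemma: if there is a repeated state at positions `j < k`, and accepting /
rejecting positions `p ≤ q` outside the cut interval, then there is a shorter witness. -/
lemma cut_witness {α σ : Type*} (M : DFA α σ) (w : List α) {j k p q : ℕ}
    (hjk : j < k) (hk : k ≤ w.length)
    (hs : M.eval (w.take j) = M.eval (w.take k))
    (hpq : p ≤ q) (hq : q ≤ w.length)
    (hp' : p ≤ j ∨ k ≤ p) (hq' : q ≤ j ∨ k ≤ q)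
    (hpa : w.take p ∈ M.accepts) (hqa : w.take q ∉ M.accepts) (hwa : w ∈ M.accepts) :
    ∃ u v w' : List α, u <+: v ∧ v <+: w' ∧ u ∈ M.accepts ∧ w' ∈ M.accepts ∧
      v ∉ M.accepts ∧ w'.length = w.length - (k - j) := by
  set W := w.take j ++ w.drop k with hW
  have hWlen : W.length = w.length - (k - j) := by
    simp [hW, List.length_take, List.length_drop]
    omega
  -- the shift function
  set f : ℕ → ℕ := fun i => if i ≤ j then i else j + (i - k) with hf
  have key : ∀ i, (i ≤ j ∨ k ≤ i) → M.eval (W.take (f i)) = M.eval (w.take i) := by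
    intro i hi
    rcases hi with hi | hi
    · have hfi : f i = i := by simp [hf, hi]
      rw [hfi]
      congr 1
      rw [hW, List.take_append, List.take_take]
      have : i - (w.take j).length = 0 := by
        simp [List.length_take]; omega
      rw [this]
      simp
      omega
    · have hfi : f i = j + (i - k) := by
        simp only [hf]
        split_ifs with hij
        · omega
        · rfl
      rw [hfi, hW]
      exact eval_cut_take M w (le_of_lt hjk) hk hs hi
  have hWeval : M.eval W = M.eval w := by
    have h1 : f w.length = W.length := by
      simp only [hf]
      split_ifs with hij
      · omega
      · omega
    have := key w.length (Or.inr hk)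
    rwa [h1, List.take_length, List.take_length] at this
  refine ⟨W.take (f p), W.take (f q), W, ?_, ?_, ?_, ?_, ?_, hWlen⟩
  · apply List.take_prefix_take_left
    simp only [hf]
    split_ifs <;> omega
  · exact List.take_prefix _ _
  · rw [DFA.mem_accepts, key p hp']
    exact (M.mem_accepts).mp hpa
  · rw [DFA.mem_accepts, hWeval]
    exact (M.mem_accepts).mp hwa
  · rw [DFA.mem_accepts, key q hq']
    exact fun hc => hqa ((M.mem_accepts).mpr hc)

theorem nonPrefixConvex_short_witness {α σ : Type*} [Fintype σ] (M : DFA α σ) (n : ℕ)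
    (hn : Fintype.card σ = n) (h2 : 2 ≤ n) (h : ¬ PrefixConvex M.accepts) :
    ∃ u v w : List α, u <+: v ∧ v <+: w ∧ u ∈ M.accepts ∧ w ∈ M.accepts ∧
      v ∉ M.accepts ∧ w.length ≤ 2 * n - 1 := by
  classical
  unfold PrefixConvex at h
  push_neg at h
  obtain ⟨u₀, v₀, w₀, hu₀, hw₀, huw₀, huv₀, hvw₀, hv₀⟩ := h
  -- P m : there is a witness whose long word has length m
  set P : ℕ → Prop := fun m => ∃ u v w : List α, u <+: v ∧ v <+: w ∧ u ∈ M.accepts ∧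
    w ∈ M.accepts ∧ v ∉ M.accepts ∧ w.length = m with hPdef
  have hP : ∃ m, P m := ⟨w₀.length, u₀, v₀, w₀, huv₀, hvw₀, hu₀, hw₀, hv₀, rfl⟩
  set m0 := Nat.find hP with hm0
  have hPm0 : P m0 := Nat.find_spec hP
  -- Q b : there is a witness with long word of length m0 and middle word of length b
  set Q : ℕ → Prop := fun b => ∃ u v w : List α, u <+: v ∧ v <+: w ∧ u ∈ M.accepts ∧
    w ∈ M.accepts ∧ v ∉ M.accepts ∧ w.length = m0 ∧ v.length = b with hQdef
  have hQ : ∃ b, Q b := by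
    obtain ⟨u, v, w, h1, h2, h3, h4, h5, h6⟩ := hPm0
    exact ⟨v.length, u, v, w, h1, h2, h3, h4, h5, h6, rfl⟩
  set b0 := Nat.find hQ with hb0
  obtain ⟨u, v, w, huv, hvw, hu, hw, hv, hwm, hvb⟩ := Nat.find_spec hQ
  rw [← hb0] at hvb
  have hveq : v = w.take b0 := by
    rw [← hvb]; exact List.prefix_iff_eq_take.mp hvw
  have hb0m : b0 ≤ m0 := by
    have := hvw.length_le
    omega
  -- a : the least index with accepting prefix
  have hA : ∃ i, w.take i ∈ M.accepts := by
    refine ⟨u.length, ?_⟩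
    rw [← List.prefix_iff_eq_take.mp (huv.trans hvw)]
    exact hu
  set a := Nat.find hA with ha
  have haacc : w.take a ∈ M.accepts := Nat.find_spec hA
  have hab : a ≤ b0 := by
    have h1 : a ≤ u.length := Nat.find_min' hA (by
      rw [← List.prefix_iff_eq_take.mp (huv.trans hvw)]; exact hu)
    have h2 := huv.length_le
    omega
  have hab' : a < b0 := by
    rcases lt_or_eq_of_le hab with h' | h'
    · exact h'
    · exfalso; apply hv; rw [hveq, ← h']; exact haacc
  have hbm : b0 < m0 := by
    rcases lt_or_eq_of_le hb0m with h' | h'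
    · exact h'
    · exfalso; apply hv
      rw [hveq, h', ← hwm, List.take_length]
      exact hw
  -- rejecting prefixes below a
  have hlow : ∀ i, i < a → w.take i ∉ M.accepts := fun i hi => Nat.find_min hA hi
  -- accepting prefixes between a and b0 (minimality of b0)
  have hmid : ∀ i, a ≤ i → i < b0 → w.take i ∈ M.accepts := by
    intro i hai hib
    by_contra hcon
    refine Nat.find_min hQ hib ⟨w.take a, w.take i, w, ?_, List.take_prefix _ _,
      haacc, hw, hcon, hwm, ?_⟩
    · exact List.take_prefix_take_left hai
    · simp [List.length_take]; omega
  -- no repeated state outside the cut-protected region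
  have hcut : ∀ x y, x < y → y ≤ m0 → (a ≤ x ∨ y ≤ a) → (b0 ≤ x ∨ y ≤ b0) →
      M.eval (w.take x) ≠ M.eval (w.take y) := by
    intro x y hxy hym hax hbx hs
    obtain ⟨u', v', w', h1, h2, h3, h4, h5, h6⟩ :=
      cut_witness M w hxy (by omega) hs (le_of_lt hab') (by omega)
        (by tauto) (by tauto)
        haacc (by rw [← hveq]; exact hv) hw
    have : P w'.length := ⟨u', v', w', h1, h2, h3, h4, h5, rfl⟩
    have hlt : w'.length < m0 := by rw [h6, hwm]; omega
    exact Nat.find_min hP hlt this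
  -- pigeonhole 1 : b0 ≤ n
  have hinj1 : Set.InjOn (fun i => M.eval (w.take i)) (Finset.range b0) := by
    intro x hx y hy hxy
    have hxy' : M.eval (w.take x) = M.eval (w.take y) := hxy
    simp only [Finset.coe_range, Set.mem_Iio] at hx hy
    by_contra hne
    have hmix : ∀ z₁ z₂ : ℕ, z₁ < z₂ → z₂ < b0 →
        M.eval (w.take z₁) = M.eval (w.take z₂) → False := by
      intro z₁ z₂ hlt hzb hz
      by_cases hca : a ≤ z₁ ∨ z₂ ≤ a
      · exact hcut z₁ z₂ hlt (by omega) hca (Or.inr (le_of_lt hzb)) hz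
      · push_neg at hca
        obtain ⟨hxa, hay⟩ := hca
        apply hlow z₁ hxa
        rw [M.mem_accepts, hz]
        exact (M.mem_accepts).mp (hmid z₂ (by omega) hzb)
    rcases Nat.lt_or_ge x y with hlt | hge
    · exact hmix x y hlt hy hxy'
    · exact hmix y x (by omega) hx hxy'.symm
  have hcard1 : b0 ≤ n := by
    have := Finset.card_le_card_of_injOn (fun i => M.eval (w.take i))
      (fun x _ => Finset.mem_univ _) hinj1
    simpa [Finset.card_range, hn] using this
  -- pigeonhole 2 : m0 - b0 + 1 ≤ n
  have hinj2 : Set.InjOn (fun i => M.eval (w.take i)) (Finset.Icc b0 m0) := by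
    intro x hx y hy hxy
    have hxy' : M.eval (w.take x) = M.eval (w.take y) := hxy
    simp only [Finset.coe_Icc, Set.mem_Icc] at hx hy
    by_contra hne
    rcases Nat.lt_or_ge x y with hlt | hge
    · exact hcut x y hlt hy.2 (Or.inl (by omega)) (Or.inl hx.1) hxy'
    · exact hcut y x (by omega) hx.2 (Or.inl (by omega)) (Or.inl hy.1) hxy'.symm
  have hcard2 : m0 + 1 - b0 ≤ n := by
    have := Finset.card_le_card_of_injOn (fun i => M.eval (w.take i))
      (fun x _ => Finset.mem_univ _) hinj2
    simpa [Nat.card_Icc, hn] using this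
  exact ⟨u, v, w, huv, hvw, hu, hw, hv, by omega⟩
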